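/- Let A = {0, a, b} with 0 < a < b coprime. Then for every N ≥ 1, NA = {0, ..., bN} \ (E(A) ∪ (bN - E(b-A))), where E(S) denotes the set of nonnegative integers not representable as a nonnegative integer combination of elements of S. -/
import Mathlib


/-- The `N`-fold sumset of a set of integers. -/
def nfold (A : Set ℤ) (N : ℕ) : Set ℤ :=
  {x | ∃ f : Fin N → ℤ, (∀ i, f i ∈ A) ∧ ∑ i, f i = x}

/-- Nonnegative integer combinations of the elements of a finite set of integers. -/
def combos (A : Finset ℤ) : Set ℤ :=
  {n | ∃ c : ℤ → ℕ, ∑ a ∈ A, (c a : ℤ) * a = n}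

/-- The exceptional set: nonnegative integers not representable. -/
def excep (A : Finset ℤ) : Set ℤ :=
  {n | 0 ≤ n ∧ n ∉ combos A}

lemma combos_pair {u v : ℤ} (hu : 0 < u) (huv : u < v) (n : ℤ) :
    n ∈ combos {0, u, v} ↔ ∃ i j : ℕ, (i : ℤ) * u + (j : ℤ) * v = n := by
  have h0u : (0:ℤ) ≠ u := hu.ne
  have h0v : (0:ℤ) ≠ v := (hu.trans huv).ne
  have huv' : u ≠ v := huv.ne
  constructor
  · rintro ⟨c, hc⟩
    refine ⟨c u, c v, ?_⟩
    rw [show ({0,u,v}:Finset ℤ) = insert 0 (insert u {v}) from rfl,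
      Finset.sum_insert (by simp [h0u, h0v]),
      Finset.sum_insert (by simp [huv']), Finset.sum_singleton] at hc
    linarith
  · rintro ⟨i, j, h⟩
    refine ⟨fun t => if t = u then i else if t = v then j else 0, ?_⟩
    rw [show ({0,u,v}:Finset ℤ) = insert 0 (insert u {v}) from rfl,
      Finset.sum_insert (by simp [h0u, h0v]),
      Finset.sum_insert (by simp [huv']), Finset.sum_singleton]
    simp [Ne.symm h0u, Ne.symm h0v, Ne.symm huv']
    linarith

lemma min_rep {u v : ℤ} (hu : 0 < u) (huv : u < v) :
    ∀ (i : ℕ), ∀ (j : ℕ) (n : ℤ), (i : ℤ) * u + (j : ℤ) * v = n →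
      ∃ i' j' : ℕ, (i' : ℤ) < v ∧ (i' : ℤ) * u + (j' : ℤ) * v = n := by
  intro i
  induction i using Nat.strong_induction_on with
  | _ i ih =>
    intro j n h
    by_cases hi : (i : ℤ) < v
    · exact ⟨i, j, hi, h⟩
    · push_neg at hi
      have hv0 : 0 < v := hu.trans huv
      have hvt : v.toNat ≤ i := by omega
      have hlt : i - v.toNat < i := by omega
      refine ih (i - v.toNat) hlt (j + u.toNat) n ?_
      have h1 : ((i - v.toNat : ℕ) : ℤ) = (i : ℤ) - v := by
        push_cast [hvt]; omega
      have h2 : ((j + u.toNat : ℕ) : ℤ) = (j : ℤ) + u := by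
        push_cast; omega
      rw [h1, h2]; ring_nf; linarith [h]

lemma nfold_add_mem {A : Set ℤ} {N : ℕ} {y z : ℤ} (hy : y ∈ A) (hz : z ∈ nfold A N) :
    y + z ∈ nfold A (N + 1) := by
  obtain ⟨f, hf, hs⟩ := hz
  refine ⟨Fin.cons y f, ?_, ?_⟩
  · intro i
    refine Fin.cases ?_ ?_ i
    · simpa using hy
    · intro k; simpa using hf k
  · rw [Fin.sum_cons, hs]

lemma nfold_iff (a b : ℤ) (N : ℕ) (x : ℤ) :
    x ∈ nfold (↑({0, a, b} : Finset ℤ)) N ↔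
      ∃ i j : ℕ, i + j ≤ N ∧ (i : ℤ) * a + (j : ℤ) * b = x := by
  induction N generalizing x with
  | zero =>
    constructor
    · rintro ⟨f, _, hs⟩
      exact ⟨0, 0, le_refl 0, by simp at hs ⊢; omega⟩
    · rintro ⟨i, j, hij, h⟩
      obtain ⟨rfl, rfl⟩ : i = 0 ∧ j = 0 := by omega
      refine ⟨fun t => 0, fun t => t.elim0, ?_⟩
      simp at h ⊢
      omega
  | succ N ih =>
    constructor
    · rintro ⟨f, hf, hs⟩
      have htail : x - f 0 ∈ nfold (↑({0, a, b} : Finset ℤ)) N := by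
        refine ⟨Fin.tail f, fun k => hf _, ?_⟩
        rw [Fin.sum_univ_succ] at hs
        simp only [Fin.tail]
        omega
      obtain ⟨i, j, hij, h⟩ := (ih (x - f 0)).mp htail
      have h0 := hf 0
      simp only [Finset.coe_insert, Set.mem_insert_iff, Finset.coe_singleton,
        Set.mem_singleton_iff] at h0
      rcases h0 with h0 | h0 | h0
      · exact ⟨i, j, by omega, by rw [h]; omega⟩
      · refine ⟨i + 1, j, by omega, ?_⟩
        push_cast
        linarith [h]
      · refine ⟨i, j + 1, by omega, ?_⟩
        push_cast
        linarith [h]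
    · rintro ⟨i, j, hij, h⟩
      have hmem : ∀ y ∈ ({0, a, b} : Finset ℤ), True := fun _ _ => trivial
      rcases Nat.eq_zero_or_pos i with rfl | hi
      · rcases Nat.eq_zero_or_pos j with rfl | hj
        · have hx : x = 0 := by push_cast at h; linarith
          have h0A : (0 : ℤ) ∈ (↑({0, a, b} : Finset ℤ) : Set ℤ) := by simp
          have := nfold_add_mem h0A ((ih 0).mpr ⟨0, 0, by omega, by push_cast; ring⟩)
          simpa [hx] using this
        · have hbA : b ∈ (↑({0, a, b} : Finset ℤ) : Set ℤ) := by simp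
          have hz : x - b ∈ nfold (↑({0, a, b} : Finset ℤ)) N := by
            refine (ih _).mpr ⟨0, j - 1, by omega, ?_⟩
            have : ((j - 1 : ℕ) : ℤ) = (j : ℤ) - 1 := by push_cast [hj]; ring
            rw [this]; push_cast at h ⊢; linarith
          have := nfold_add_mem hbA hz
          simpa using this
      · have haA : a ∈ (↑({0, a, b} : Finset ℤ) : Set ℤ) := by simp
        have hz : x - a ∈ nfold (↑({0, a, b} : Finset ℤ)) N := by
          refine (ih _).mpr ⟨i - 1, j, by omega, ?_⟩
          have : ((i - 1 : ℕ) : ℤ) = (i : ℤ) - 1 := by push_cast [hi]; ring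
          rw [this]; push_cast at h ⊢; linarith
        have := nfold_add_mem haA hz
        simpa using this

/-- For `A = {0, a, b}` with `0 < a < b` coprime and every `N ≥ 1`,
`NA = {0, …, bN} \ (E(A) ∪ (bN - E(b-A)))`. -/
theorem stmt3 (a b : ℤ) (ha : 0 < a) (hab : a < b) (hcop : Int.gcd a b = 1)
    (N : ℕ) (hN : 1 ≤ N) :
    nfold (↑({0, a, b} : Finset ℤ)) N =
      {n : ℤ | 0 ≤ n ∧ n ≤ (N : ℤ) * b} \
        (excep ({0, a, b} : Finset ℤ) ∪
          (fun e => (N : ℤ) * b - e) ''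
            excep (({0, a, b} : Finset ℤ).image (fun x => b - x))) := by
  have hb : (0:ℤ) < b := ha.trans hab
  have hba : (0:ℤ) < b - a := by linarith
  have hbab : b - a < b := by linarith
  have himg : ({0, a, b} : Finset ℤ).image (fun x => b - x) = {0, b - a, b} := by
    ext t
    simp only [Finset.mem_image, Finset.mem_insert, Finset.mem_singleton]
    constructor
    · rintro ⟨y, (rfl | rfl | rfl), rfl⟩ <;> omega
    · rintro (rfl | rfl | rfl)
      · exact ⟨b, by omega, by ring⟩
      · exact ⟨a, by omega, by ring⟩
      · exact ⟨0, by omega, by ring⟩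
  have hcop' : IsCoprime a b := Int.isCoprime_iff_gcd_eq_one.mpr hcop
  ext x
  simp only [Set.mem_diff, Set.mem_setOf_eq, Set.mem_union, Set.mem_image, nfold_iff]
  constructor
  · rintro ⟨i, j, hij, rfl⟩
    have hijZ : (i : ℤ) + (j : ℤ) ≤ (N : ℤ) := by exact_mod_cast hij
    refine ⟨⟨by positivity, by nlinarith⟩, ?_⟩
    rintro (⟨_, hnc⟩ | ⟨e, ⟨he0, henc⟩, hex⟩)
    · exact hnc ((combos_pair ha hab _).mpr ⟨i, j, rfl⟩)
    · apply henc
      rw [himg, combos_pair hba hbab]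
      refine ⟨i, N - i - j, ?_⟩
      have hcast : ((N - i - j : ℕ) : ℤ) = (N : ℤ) - i - j := by push_cast [Nat.le_sub_iff_add_le]; omega
      rw [hcast]
      have : e = (N : ℤ) * b - ((i : ℤ) * a + (j : ℤ) * b) := by linarith [hex]
      rw [this]; ring
  · rintro ⟨⟨hx0, hxN⟩, hnot⟩
    push_neg at hnot
    obtain ⟨hnE, hnI⟩ := hnot
    have hxc : x ∈ combos {0, a, b} := by
      by_contra hc
      exact hnE ⟨hx0, hc⟩
    have hyc : (N : ℤ) * b - x ∈ combos ({0, b - a, b} : Finset ℤ) := by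
      by_contra hc
      have hmem : (N : ℤ) * b - x ∈ excep (({0, a, b} : Finset ℤ).image (fun x => b - x)) := by
        rw [himg]; exact ⟨by linarith, hc⟩
      have := hnI _ hmem
      simp at this
    rw [combos_pair ha hab] at hxc
    rw [combos_pair hba hbab] at hyc
    obtain ⟨i0, j0, h0⟩ := hxc
    obtain ⟨i, j, hi, hx⟩ := min_rep ha hab i0 j0 x h0
    obtain ⟨k0, l0, hk0⟩ := hyc
    obtain ⟨k, l, hk, hy⟩ := min_rep hba hbab k0 l0 _ hk0
    -- (i - k) * a = (N - j - k - l) * b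
    have key : ((i : ℤ) - k) * a = ((N : ℤ) - j - k - l) * b := by ring_nf; nlinarith [hx, hy]
    have hdvd : b ∣ ((i : ℤ) - k) := by
      have h1 : b ∣ ((i : ℤ) - k) * a := ⟨(N : ℤ) - j - k - l, by linarith [key]⟩
      exact (IsCoprime.dvd_of_dvd_mul_right hcop'.symm h1)
    obtain ⟨m, hm⟩ := hdvd
    have hm0 : m = 0 := by
      have hi0 : (0:ℤ) ≤ i := Int.ofNat_nonneg i
      have hk0' : (0:ℤ) ≤ k := Int.ofNat_nonneg k
      have h1 : b * m < b * 1 := by rw [mul_one]; linarith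
      have h2 : b * (-1) < b * m := by
        rw [mul_neg_one]; linarith
      have := (mul_lt_mul_iff_right₀ hb).mp h1
      have := (mul_lt_mul_iff_right₀ hb).mp h2
      omega
    have hik : (i : ℤ) = k := by rw [hm0, mul_zero] at hm; omega
    have hNjkl : (N : ℤ) = j + k + l := by
      have h0 : ((N : ℤ) - j - k - l) * b = 0 := by rw [← key, hik]; ring
      have := mul_eq_zero.mp h0
      rcases this with h | h
      · linarith
      · exact absurd h hb.ne'
    have hl0 : (0:ℤ) ≤ l := Int.ofNat_nonneg l
    refine ⟨i, j, ?_, hx⟩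
    have : (i : ℤ) + j ≤ N := by omega
    exact_mod_cast this
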